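/- Let φ be a modal formula globally satisfied in a nonempty Kripke model M (possibly infinite) in which any two ramified worlds have the same type with respect to φ. Then φ is globally satisfied in a nonempty finite Kripke model containing at most one ramified world. -/
import Mathlib


/-- Modal formulas over propositional variables indexed by `ℕ`. -/
inductive ModalFormula : Type
  | var : ℕ → ModalFormula
  | neg : ModalFormula → ModalFormula
  | and : ModalFormula → ModalFormula → ModalFormula
  | or  : ModalFormula → ModalFormula → ModalFormula
  | dia : ModalFormula → ModalFormula
  | box : ModalFormula → ModalFormula

namespace ModalFormula

/-- The canonical encoding of modal formulas by natural numbers. -/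
def encode : ModalFormula → ℕ
  | var n => 6 * n
  | neg f => 6 * encode f + 1
  | dia f => 6 * encode f + 2
  | box f => 6 * encode f + 3
  | and f g => 6 * Nat.pair (encode f) (encode g) + 4
  | or f g  => 6 * Nat.pair (encode f) (encode g) + 5

/-- The canonical decoding of natural numbers as modal formulas. -/
def ofNat (n : ℕ) : ModalFormula :=
  if h0 : n % 6 = 0 then var (n / 6)
  else
    have hn : 0 < n := Nat.pos_of_ne_zero (fun h => h0 (by simp [h]))
    have hd : n / 6 < n := Nat.div_lt_self hn (by norm_num)
    have h1 : (n / 6).unpair.1 < n := lt_of_le_of_lt (Nat.unpair_left_le _) hd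
    have h2 : (n / 6).unpair.2 < n := lt_of_le_of_lt (Nat.unpair_right_le _) hd
    if n % 6 = 1 then neg (ofNat (n / 6))
    else if n % 6 = 2 then dia (ofNat (n / 6))
    else if n % 6 = 3 then box (ofNat (n / 6))
    else if n % 6 = 4 then and (ofNat (n / 6).unpair.1) (ofNat (n / 6).unpair.2)
    else or (ofNat (n / 6).unpair.1) (ofNat (n / 6).unpair.2)
  termination_by n
  decreasing_by all_goals assumption

theorem ofNat_encode : ∀ f : ModalFormula, ofNat (encode f) = f := by
  intro f
  induction f with
  | var n =>
      rw [encode, ofNat]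
      simp [Nat.mul_mod_right, Nat.mul_div_cancel_left]
  | neg f ih =>
      rw [encode, ofNat]
      have e1 : (6 * encode f + 1) % 6 = 1 := by omega
      have e2 : (6 * encode f + 1) / 6 = encode f := by omega
      simp [e1, e2, ih]
  | and f g ihf ihg =>
      rw [encode, ofNat]
      have e1 : (6 * Nat.pair (encode f) (encode g) + 4) % 6 = 4 := by omega
      have e2 : (6 * Nat.pair (encode f) (encode g) + 4) / 6 = Nat.pair (encode f) (encode g) := by
        omega
      simp [e1, e2, ihf, ihg]
  | or f g ihf ihg =>
      rw [encode, ofNat]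
      have e1 : (6 * Nat.pair (encode f) (encode g) + 5) % 6 = 5 := by omega
      have e2 : (6 * Nat.pair (encode f) (encode g) + 5) / 6 = Nat.pair (encode f) (encode g) := by
        omega
      simp [e1, e2, ihf, ihg]
  | dia f ih =>
      rw [encode, ofNat]
      have e1 : (6 * encode f + 2) % 6 = 2 := by omega
      have e2 : (6 * encode f + 2) / 6 = encode f := by omega
      simp [e1, e2, ih]
  | box f ih =>
      rw [encode, ofNat]
      have e1 : (6 * encode f + 3) % 6 = 3 := by omega
      have e2 : (6 * encode f + 3) / 6 = encode f := by omega
      simp [e1, e2, ih]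

theorem encode_ofNat : ∀ n : ℕ, encode (ofNat n) = n := by
  intro n
  induction n using Nat.strong_induction_on with
  | _ n ih =>
    rw [ofNat]
    by_cases h0 : n % 6 = 0
    · simp only [h0, dif_pos, encode]
      omega
    · have hn : 0 < n := Nat.pos_of_ne_zero (fun h => h0 (by simp [h]))
      have hd : n / 6 < n := Nat.div_lt_self hn (by norm_num)
      have h1 : (n / 6).unpair.1 < n := lt_of_le_of_lt (Nat.unpair_left_le _) hd
      have h2 : (n / 6).unpair.2 < n := lt_of_le_of_lt (Nat.unpair_right_le _) hd
      rw [dif_neg h0]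
      by_cases e1 : n % 6 = 1
      · rw [if_pos e1, encode, ih _ hd]; omega
      · rw [if_neg e1]
        by_cases e2 : n % 6 = 2
        · rw [if_pos e2, encode, ih _ hd]; omega
        · rw [if_neg e2]
          by_cases e3 : n % 6 = 3
          · rw [if_pos e3, encode, ih _ hd]; omega
          · rw [if_neg e3]
            by_cases e4 : n % 6 = 4
            · rw [if_pos e4, encode, ih _ h1, ih _ h2, Nat.pair_unpair]; omega
            · rw [if_neg e4, encode, ih _ h1, ih _ h2, Nat.pair_unpair]; omega

/-- The canonical bijection between modal formulas and natural numbers. -/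
def equivNat : ModalFormula ≃ ℕ := ⟨encode, ofNat, ofNat_encode, encode_ofNat⟩

/-- The canonical `Primcodable` instance induced by the canonical encoding. -/
instance : Primcodable ModalFormula := Primcodable.ofEquiv ℕ equivNat

end ModalFormula

/-- Local satisfaction of a modal formula at a world of a Kripke model `(W, R, π)`. -/
def Sat {W : Type*} (R : W → W → Prop) (π : W → ℕ → Prop) : W → ModalFormula → Prop
  | w, .var n => π w n
  | w, .neg f => ¬ Sat R π w f
  | w, .and f g => Sat R π w f ∧ Sat R π w g
  | w, .or f g => Sat R π w f ∨ Sat R π w g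
  | w, .dia f => ∃ v, R w v ∧ Sat R π v f
  | w, .box f => ∀ v, R w v → Sat R π v f

/-- Global satisfaction: `φ` holds at every world of the model. -/
def GlobalSat {W : Type*} (R : W → W → Prop) (π : W → ℕ → Prop) (φ : ModalFormula) : Prop :=
  ∀ w, Sat R π w φ

/-- `x` has at least `m` pairwise distinct `R`-successors. -/
def DegGe {W : Type*} (R : W → W → Prop) (m : ℕ) (x : W) : Prop :=
  ∃ f : Fin m → W, Function.Injective f ∧ ∀ i, R x (f i)

/-- A world is ramified if it has at least `7` pairwise distinct successors. -/
def Ramified {W : Type*} (R : W → W → Prop) (x : W) : Prop := DegGe R 7 x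

/-- The frame condition Γ. -/
def FrameGamma {W : Type*} (R : W → W → Prop) : Prop :=
  ∀ x y u z, R x y → R x u → R u z → DegGe R 2 x → DegGe R 4 u → DegGe R 2 z → R y z

/-- The frame condition Γ₁. -/
def FrameGamma1 {W : Type*} (R : W → W → Prop) : Prop :=
  (∃ v₁ v₂, Ramified R v₁ ∧ Ramified R v₂ ∧ v₁ ≠ v₂) →
    (∀ x, ¬ R x x) ∧
    (∀ x y z, Ramified R x → R x y → R y z → R x z) ∧
    (∀ x y u z, R x y → R x u → R u z → DegGe R 2 x → DegGe R 4 u → DegGe R 2 z →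
      R y z ∨ R x z)

/-- The frame condition Γ₂. -/
def FrameGamma2 {W : Type*} (R : W → W → Prop) : Prop :=
  (∀ x y z, Ramified R x → R x y → R y z → R x z) ∧
  ((∃ v, Ramified R v ∧ R v v) →
    ∀ x y u z, R x y → R x u → R u z → DegGe R 2 x → DegGe R 4 u → DegGe R 2 z →
      R y z ∨ R x z)

/-- The set of subformulas of a modal formula. -/
def Subformulas : ModalFormula → Set ModalFormula
  | .var n => {.var n}
  | .neg f => insert (.neg f) (Subformulas f)
  | .and f g => insert (.and f g) (Subformulas f ∪ Subformulas g)
  | .or f g => insert (.or f g) (Subformulas f ∪ Subformulas g)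
  | .dia f => insert (.dia f) (Subformulas f)
  | .box f => insert (.box f) (Subformulas f)

/-- Two worlds have the same type with respect to `φ`: they satisfy the same
subformulas of `φ`. -/
def SameType {W : Type*} (R : W → W → Prop) (π : W → ℕ → Prop) (φ : ModalFormula)
    (w₁ w₂ : W) : Prop :=
  ∀ ψ ∈ Subformulas φ, (Sat R π w₁ ψ ↔ Sat R π w₂ ψ)


namespace FiltAux

theorem mem_subformulas_self (ψ : ModalFormula) : ψ ∈ Subformulas ψ := by
  cases ψ <;> simp [Subformulas]

theorem subformulas_trans {φ ψ : ModalFormula} (h : ψ ∈ Subformulas φ) :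
    Subformulas ψ ⊆ Subformulas φ := by
  induction φ with
  | var n =>
      simp only [Subformulas, Set.mem_singleton_iff] at h
      subst h; exact subset_rfl
  | neg f ih =>
      rcases Set.mem_insert_iff.1 h with rfl | h
      · exact subset_rfl
      · exact (ih h).trans (Set.subset_insert _ _)
  | and f g ihf ihg =>
      rcases Set.mem_insert_iff.1 h with rfl | h
      · exact subset_rfl
      · rcases h with h | h
        · exact (ihf h).trans ((Set.subset_union_left).trans (Set.subset_insert _ _))
        · exact (ihg h).trans ((Set.subset_union_right).trans (Set.subset_insert _ _))
  | or f g ihf ihg =>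
      rcases Set.mem_insert_iff.1 h with rfl | h
      · exact subset_rfl
      · rcases h with h | h
        · exact (ihf h).trans ((Set.subset_union_left).trans (Set.subset_insert _ _))
        · exact (ihg h).trans ((Set.subset_union_right).trans (Set.subset_insert _ _))
  | dia f ih =>
      rcases Set.mem_insert_iff.1 h with rfl | h
      · exact subset_rfl
      · exact (ih h).trans (Set.subset_insert _ _)
  | box f ih =>
      rcases Set.mem_insert_iff.1 h with rfl | h
      · exact subset_rfl
      · exact (ih h).trans (Set.subset_insert _ _)

theorem subformulas_finite (φ : ModalFormula) : (Subformulas φ).Finite := by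
  induction φ with
  | var n => exact Set.finite_singleton _
  | neg f ih => exact ih.insert _
  | and f g ihf ihg => exact (ihf.union ihg).insert _
  | or f g ihf ihg => exact (ihf.union ihg).insert _
  | dia f ih => exact ih.insert _
  | box f ih => exact ih.insert _

variable {W : Type} (R : W → W → Prop) (π : W → ℕ → Prop) (φ : ModalFormula)

/-- The type of a world: which subformulas of `φ` it satisfies. -/
def T (w : W) : {ψ // ψ ∈ Subformulas φ} → Prop := fun ψ => Sat R π w ψ.1

/-- A chosen representative of each realized type. -/
noncomputable def rep (A : Set.range (T R π φ)) : W := A.2.choose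

theorem rep_spec (A : Set.range (T R π φ)) : T R π φ (rep R π φ A) = A.1 := A.2.choose_spec

/-- The filtrated relation. -/
def R' (A B : Set.range (T R π φ)) : Prop := ∃ v, R (rep R π φ A) v ∧ B.1 = T R π φ v

/-- The filtrated valuation. -/
def π' (A : Set.range (T R π φ)) (n : ℕ) : Prop := π (rep R π φ A) n

theorem sat_congr {w v : W} (h : T R π φ w = T R π φ v) {ψ : ModalFormula}
    (hψ : ψ ∈ Subformulas φ) : Sat R π w ψ ↔ Sat R π v ψ :=
  iff_of_eq (congrFun h ⟨ψ, hψ⟩)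

theorem filtration : ∀ ψ : ModalFormula, ψ ∈ Subformulas φ →
    ∀ A : Set.range (T R π φ),
      (Sat (R' R π φ) (π' R π φ) A ψ ↔ Sat R π (rep R π φ A) ψ) := by
  intro ψ
  induction ψ with
  | var n => intro _ A; exact Iff.rfl
  | neg f ih =>
      intro hψ A
      have hf : f ∈ Subformulas φ :=
        subformulas_trans hψ (Set.mem_insert_of_mem _ (mem_subformulas_self f))
      simp only [Sat, ih hf A]
  | and f g ihf ihg =>
      intro hψ A
      have hf : f ∈ Subformulas φ :=
        subformulas_trans hψ (Set.mem_insert_of_mem _ (Or.inl (mem_subformulas_self f)))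
      have hg : g ∈ Subformulas φ :=
        subformulas_trans hψ (Set.mem_insert_of_mem _ (Or.inr (mem_subformulas_self g)))
      simp only [Sat, ihf hf A, ihg hg A]
  | or f g ihf ihg =>
      intro hψ A
      have hf : f ∈ Subformulas φ :=
        subformulas_trans hψ (Set.mem_insert_of_mem _ (Or.inl (mem_subformulas_self f)))
      have hg : g ∈ Subformulas φ :=
        subformulas_trans hψ (Set.mem_insert_of_mem _ (Or.inr (mem_subformulas_self g)))
      simp only [Sat, ihf hf A, ihg hg A]
  | dia f ih =>
      intro hψ A
      have hf : f ∈ Subformulas φ :=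
        subformulas_trans hψ (Set.mem_insert_of_mem _ (mem_subformulas_self f))
      constructor
      · rintro ⟨B, ⟨v, hRv, hB⟩, hS⟩
        refine ⟨v, hRv, ?_⟩
        have h1 : Sat R π (rep R π φ B) f := (ih hf B).1 hS
        have h2 : T R π φ (rep R π φ B) = T R π φ v := (rep_spec R π φ B).trans hB
        exact (sat_congr R π φ h2 hf).1 h1
      · rintro ⟨v, hRv, hv⟩
        refine ⟨⟨T R π φ v, ⟨v, rfl⟩⟩, ⟨v, hRv, rfl⟩, ?_⟩
        apply (ih hf _).2
        exact (sat_congr R π φ (rep_spec R π φ ⟨T R π φ v, ⟨v, rfl⟩⟩) hf).2 hv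
  | box f ih =>
      intro hψ A
      have hf : f ∈ Subformulas φ :=
        subformulas_trans hψ (Set.mem_insert_of_mem _ (mem_subformulas_self f))
      constructor
      · intro h v hRv
        have hS := h ⟨T R π φ v, ⟨v, rfl⟩⟩ ⟨v, hRv, rfl⟩
        have h1 := (ih hf _).1 hS
        exact (sat_congr R π φ (rep_spec R π φ ⟨T R π φ v, ⟨v, rfl⟩⟩) hf).1 h1
      · rintro h B ⟨v, hRv, hB⟩
        apply (ih hf B).2
        have h2 : T R π φ (rep R π φ B) = T R π φ v := (rep_spec R π φ B).trans hB
        exact (sat_congr R π φ h2 hf).2 (h v hRv)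

end FiltAux

/-- If `φ` is globally satisfied in a nonempty Kripke model in which any two ramified worlds
have the same type with respect to `φ`, then `φ` is globally satisfied in a nonempty finite
Kripke model containing at most one ramified world. -/
theorem same_type_ramified_to_finite_at_most_one_ramified (φ : ModalFormula)
    (W : Type) (R : W → W → Prop) (π : W → ℕ → Prop)
    (hne : Nonempty W) (hsat : GlobalSat R π φ)
    (hram : ∀ w₁ w₂, Ramified R w₁ → Ramified R w₂ → SameType R π φ w₁ w₂) :
    ∃ (W' : Type) (R' : W' → W' → Prop) (π' : W' → ℕ → Prop),
      Finite W' ∧ Nonempty W' ∧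
      (∀ v₁ v₂, Ramified R' v₁ → Ramified R' v₂ → v₁ = v₂) ∧ GlobalSat R' π' φ := by
  classical
  have hfin : Finite {ψ // ψ ∈ Subformulas φ} := (FiltAux.subformulas_finite φ).to_subtype
  refine ⟨Set.range (FiltAux.T R π φ), FiltAux.R' R π φ, FiltAux.π' R π φ,
    Subtype.finite, ⟨⟨_, hne.some, rfl⟩⟩, ?_, ?_⟩
  · intro A B hA hB
    have key : ∀ C : Set.range (FiltAux.T R π φ), Ramified (FiltAux.R' R π φ) C →
        Ramified R (FiltAux.rep R π φ C) := by
      rintro C ⟨f, hfinj, hf⟩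
      refine ⟨fun i => (hf i).choose, ?_, fun i => (hf i).choose_spec.1⟩
      intro i j hij
      have h1 : (f i).1 = (f j).1 := by
        rw [(hf i).choose_spec.2, (hf j).choose_spec.2]
        exact congrArg (FiltAux.T R π φ) hij
      exact hfinj (Subtype.ext h1)
    have hst := hram _ _ (key A hA) (key B hB)
    apply Subtype.ext
    rw [← FiltAux.rep_spec R π φ A, ← FiltAux.rep_spec R π φ B]
    funext ψ
    exact propext (hst ψ.1 ψ.2)
  · intro A
    exact (FiltAux.filtration R π φ φ (FiltAux.mem_subformulas_self φ) A).2 (hsat _)
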